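/- For the completion of any variable-isolated ASPMT program in which no variables occur in arguments of uninterpreted functions, applying the variable elimination method repeatedly to each equivalence of the completion results in a formula that is classically equivalent to the completion and contains no variables. -/

import Mathlib

/-!
A deep embedding of (one-sorted) first-order logic with equality,
following the functional stable model semantics of
Bartholomew & Lee, used by the ASPMT / aspsmt2smt paper.
-/

namespace ASPMT

/-- A first-order signature: function symbols and predicate symbols with arities. -/
structure Signature where
  Func : Type
  Pred : Type
  funcAr : Func → ℕ
  predAr : Pred → ℕ

variable {σ : Signature}

/-- First-order terms; variables are indexed by natural numbers. -/
inductive Term (σ : Signature) : Type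
  | var : ℕ → Term σ
  | app : (f : σ.Func) → (Fin (σ.funcAr f) → Term σ) → Term σ

/-- First-order formulas (with equality). `¬F` is `F.imp falsum`. -/
inductive Formula (σ : Signature) : Type
  | falsum : Formula σ
  | eq : Term σ → Term σ → Formula σ
  | pred : (p : σ.Pred) → (Fin (σ.predAr p) → Term σ) → Formula σ
  | and : Formula σ → Formula σ → Formula σ
  | or : Formula σ → Formula σ → Formula σ
  | imp : Formula σ → Formula σ → Formula σ
  | all : ℕ → Formula σ → Formula σ
  | ex : ℕ → Formula σ → Formula σ

/-- Negation, as an abbreviation. -/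
def Formula.not (F : Formula σ) : Formula σ := F.imp .falsum

/-- An interpretation (structure) for the signature, with nonempty universe. -/
structure Interp (σ : Signature) where
  M : Type
  nonempty : Nonempty M
  funcI : (f : σ.Func) → (Fin (σ.funcAr f) → M) → M
  predI : (p : σ.Pred) → (Fin (σ.predAr p) → M) → Prop

/-- Updating a variable assignment at a variable. -/
def updAssign {α : Type} (ν : ℕ → α) (x : ℕ) (a : α) : ℕ → α :=
  fun y => if y = x then a else ν y

/-- Evaluation of a term in an interpretation under a variable assignment. -/
def Term.eval (I : Interp σ) (ν : ℕ → I.M) : Term σ → I.M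
  | .var x => ν x
  | .app f ts => I.funcI f fun i => (ts i).eval I ν

/-- Tarskian satisfaction. -/
def Formula.Sat (I : Interp σ) : (ν : ℕ → I.M) → Formula σ → Prop
  | _, .falsum => False
  | ν, .eq t u => t.eval I ν = u.eval I ν
  | ν, .pred p ts => I.predI p fun i => (ts i).eval I ν
  | ν, .and F G => F.Sat I ν ∧ G.Sat I ν
  | ν, .or F G => F.Sat I ν ∨ G.Sat I ν
  | ν, .imp F G => F.Sat I ν → G.Sat I ν
  | ν, .all x F => ∀ a : I.M, F.Sat I (updAssign ν x a)
  | ν, .ex x F => ∃ a : I.M, F.Sat I (updAssign ν x a)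

/-- Variables occurring in a term. -/
def Term.vars : Term σ → Set ℕ
  | .var x => {x}
  | .app _ ts => ⋃ i, (ts i).vars

/-- Free variables of a formula. -/
def Formula.fv : Formula σ → Set ℕ
  | .falsum => ∅
  | .eq t u => t.vars ∪ u.vars
  | .pred _ ts => ⋃ i, (ts i).vars
  | .and F G => F.fv ∪ G.fv
  | .or F G => F.fv ∪ G.fv
  | .imp F G => F.fv ∪ G.fv
  | .all x F => F.fv \ {x}
  | .ex x F => F.fv \ {x}

end ASPMT


namespace ASPMT

variable {σ : Signature}

/-- Substitution of a term `t` for a variable `x` in a term. -/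
def Term.subst : Term σ → ℕ → Term σ → Term σ
  | .var y, x, t => if y = x then t else .var y
  | .app f ts, x, t => .app f fun i => (ts i).subst x t

/-- Atomic formulas. -/
inductive Atom (σ : Signature) : Type
  | eq : Term σ → Term σ → Atom σ
  | pred : (p : σ.Pred) → (Fin (σ.predAr p) → Term σ) → Atom σ

/-- A literal: an atomic formula, possibly preceded with `¬` (`pos = false`). -/
structure Lit (σ : Signature) where
  atom : Atom σ
  pos : Bool

/-- A conjunction `C₁ ∧ … ∧ Cₙ` of possibly negated atomic formulas. -/
abbrev Conj (σ : Signature) := List (Lit σ)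

/-- Variables occurring in an atomic formula. -/
def Atom.vars : Atom σ → Set ℕ
  | .eq t u => t.vars ∪ u.vars
  | .pred _ ts => ⋃ i, (ts i).vars

/-- Variables occurring in a literal. -/
def Lit.vars (l : Lit σ) : Set ℕ := l.atom.vars

/-- Variables occurring in a conjunction of literals. -/
def conjVars (L : Conj σ) : Set ℕ := {x | ∃ l ∈ L, x ∈ l.vars}

/-- Substitution in an atomic formula. -/
def Atom.subst : Atom σ → ℕ → Term σ → Atom σ
  | .eq a b, x, t => .eq (a.subst x t) (b.subst x t)
  | .pred p ts, x, t => .pred p fun i => (ts i).subst x t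

/-- Substitution in a literal. -/
def Lit.subst (l : Lit σ) (x : ℕ) (t : Term σ) : Lit σ := ⟨l.atom.subst x t, l.pos⟩

/-- `D^x_t`: the result of substituting `t` for every occurrence of the variable
`x` in the conjunction `D`. -/
def conjSubst (x : ℕ) (t : Term σ) (L : Conj σ) : Conj σ := L.map (Lit.subst · x t)

/-- The literal `l` is a non-negated conjunct of the form `x = t` or `t = x`. -/
def isolator (x : ℕ) (l : Lit σ) : Prop :=
  l.pos = true ∧ ∃ t : Term σ, l.atom = .eq (.var x) t ∨ l.atom = .eq t (.var x)

/-- The edge relation of the variable dependency graph of a conjunction `L`: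
there is an edge from `v` to `u` if some conjunct of `L` is `v = t` or `t = v`
for a term `t` in which `u` appears. -/
def depEdgeC (L : Conj σ) (v u : ℕ) : Prop :=
  ∃ l ∈ L, l.pos = true ∧ ∃ t : Term σ,
    (l.atom = .eq (.var v) t ∨ l.atom = .eq t (.var v)) ∧ u ∈ t.vars

/-- `v` depends on `u`: there is a directed path (of length ≥ 1) from `v` to `u`
in the variable dependency graph of `L`. -/
def dependsOn (L : Conj σ) : ℕ → ℕ → Prop := Relation.TransGen (depEdgeC L)

/-- The variable dependency graph of `L` is acyclic. -/
def AcyclicDeps (L : Conj σ) : Prop := ∀ v, ¬ dependsOn L v v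

/-- One step of the substitution process: select a variable `x` still occurring in
`L` and a non-negated conjunct `x = t` or `t = x` of `L` such that no variable
occurring in `t` depends on `x`, and replace `L` by `L^x_t`. -/
def SubstStep (L L' : Conj σ) : Prop :=
  ∃ x ∈ conjVars L, ∃ t : Term σ,
    (∃ l ∈ L, l.pos = true ∧ (l.atom = .eq (.var x) t ∨ l.atom = .eq t (.var x))) ∧
    (∀ u ∈ t.vars, ¬ dependsOn L u x) ∧
    L' = conjSubst x t L

/-- Satisfaction of an atomic formula. -/
def Atom.SatA (I : Interp σ) (ν : ℕ → I.M) : Atom σ → Prop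
  | .eq t u => t.eval I ν = u.eval I ν
  | .pred p ts => I.predI p fun i => (ts i).eval I ν

/-- Satisfaction of a literal. -/
def Lit.SatL (I : Interp σ) (ν : ℕ → I.M) (l : Lit σ) : Prop :=
  if l.pos then l.atom.SatA I ν else ¬ l.atom.SatA I ν

/-- Satisfaction of a conjunction of literals. -/
def SatConj (I : Interp σ) (ν : ℕ → I.M) (L : Conj σ) : Prop :=
  ∀ l ∈ L, l.SatL I ν

end ASPMT


namespace ASPMT

variable {σ : Signature}

/-- The state of the substitution process on an implication `B → (f = u)`:
the body `B` together with the current value term `u` (initially the variable `v`);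
the ground head term `f` is unaffected by substitutions. -/
abbrev State8 (σ : Signature) := Conj σ × Term σ

/-- Variables occurring in the implication `B → (f = u)` (with `f` ground). -/
def vars8 (S : State8 σ) : Set ℕ := conjVars S.1 ∪ S.2.vars

/-- One step of the substitution process on `D = (B → f = u)`: select a variable
`x` still occurring in `D` and a non-negated conjunct `x = t` or `t = x` in the
body `B` such that no variable occurring in `t` depends on `x`, and replace `D`
by `D^x_t`. -/
def SubstStep8 (S S' : State8 σ) : Prop :=
  ∃ x ∈ vars8 S, ∃ t : Term σ,
    (∃ l ∈ S.1, l.pos = true ∧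
      (l.atom = .eq (.var x) t ∨ l.atom = .eq t (.var x))) ∧
    (∀ u ∈ t.vars, ¬ dependsOn S.1 u x) ∧
    S' = (conjSubst x t S.1, S.2.subst x t)

end ASPMT


namespace ASPMT

variable {σ : Signature}

/-- Truth `⊤ := ¬⊥`. -/
def verum : Formula σ := Formula.falsum.imp .falsum

/-- Conjunction of a finite list of formulas. -/
def bigAnd (l : List (Formula σ)) : Formula σ := l.foldr .and verum

/-- Disjunction of a finite list of formulas. -/
def bigOr (l : List (Formula σ)) : Formula σ := l.foldr .or .falsum

/-- `∀ x₁ … xₙ F`. -/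
def allN (xs : List ℕ) (F : Formula σ) : Formula σ := xs.foldr .all F

/-- `∃ x₁ … xₙ F`. -/
def exN (xs : List ℕ) (F : Formula σ) : Formula σ := xs.foldr .ex F

/-- `F ↔ G` as an abbreviation. -/
def Formula.iff (F G : Formula σ) : Formula σ := (F.imp G).and (G.imp F)

/-- An atomic formula as a formula. -/
def Atom.toFormula : Atom σ → Formula σ
  | .eq t u => .eq t u
  | .pred p ts => .pred p ts

/-- A literal as a formula. -/
def Lit.toFormula (l : Lit σ) : Formula σ :=
  if l.pos then l.atom.toFormula else l.atom.toFormula.not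

/-- A conjunction of literals as a formula. -/
def conjToFormula (L : Conj σ) : Formula σ := bigAnd (L.map Lit.toFormula)

/-- A list enumerating the variables of a term. -/
def Term.varList : Term σ → List ℕ
  | .var x => [x]
  | .app f ts =>
      (List.finRange (σ.funcAr f)).foldr (fun i acc => (ts i).varList ++ acc) []

/-- A list enumerating the variables of an atomic formula. -/
def Atom.varList : Atom σ → List ℕ
  | .eq t u => t.varList ++ u.varList
  | .pred p ts =>
      (List.finRange (σ.predAr p)).foldr (fun i acc => (ts i).varList ++ acc) []

/-- A list enumerating the variables of a conjunction of literals. -/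
def conjVarList (L : Conj σ) : List ℕ :=
  L.foldr (fun l acc => l.atom.varList ++ acc) []

/-- An ASPMT program (with no variables in arguments of uninterpreted functions),
presented with its rules grouped by head: `defs` is a list of pairs of a (ground)
head term `f(t)` together with the list of rules `f(t) = v ← B` for that head
(each given by its value variable `v` and its body `B`, a conjunction of possibly
negated atomic formulas); `constraints` is the list of bodies of the constraint
rules `⊥ ← B`.  Distinct groups have distinct head terms. -/
structure Program (σ : Signature) where
  defs : List (Term σ × List (ℕ × Conj σ))
  constraints : List (Conj σ)
  heads_distinct : defs.Pairwise fun a b => a.1 ≠ b.1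

/-- The head term is `f(t)` for an uninterpreted function `f` whose arguments `t`
contain no variables. -/
def IsHead (U : Set σ.Func) (g : Term σ) : Prop :=
  ∃ f ∈ U, ∃ ts : Fin (σ.funcAr f) → Term σ,
    g = Term.app f ts ∧ ∀ i, (ts i).vars = (∅ : Set ℕ)

/-- No variables occur in arguments of uninterpreted functions (the functions in
`U`) in a term. -/
def Term.uGround (U : Set σ.Func) : Term σ → Prop
  | .var _ => True
  | .app f ts => (∀ i, (ts i).uGround U) ∧ (f ∈ U → ∀ i, (ts i).vars = (∅ : Set ℕ))

/-- No variables occur in arguments of uninterpreted functions in an atom. -/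
def Atom.uGround (U : Set σ.Func) : Atom σ → Prop
  | .eq t u => t.uGround U ∧ u.uGround U
  | .pred _ ts => ∀ i, (ts i).uGround U

/-- No variables occur in arguments of uninterpreted functions in a conjunction. -/
def conjUGround (U : Set σ.Func) (L : Conj σ) : Prop := ∀ l ∈ L, l.atom.uGround U

/-- A rule `g = v ← B` is variable isolated: every variable in it occurs in a
non-negated equality conjunct `x = t` or `t = x` of `B`, and the variable
dependency graph of `B` is acyclic. -/
def RuleIsolated (v : ℕ) (B : Conj σ) : Prop :=
  (∀ x ∈ insert v (conjVars B), ∃ l ∈ B, isolator x l) ∧ AcyclicDeps B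

/-- A constraint `⊥ ← B` is variable isolated. -/
def ConstraintIsolated (B : Conj σ) : Prop :=
  (∀ x ∈ conjVars B, ∃ l ∈ B, isolator x l) ∧ AcyclicDeps B

/-- The equivalence `∀w(f = w ↔ ∃x(B₁(w,x) ∨ … ∨ Bₖ(w,x)))` of the completion
for the head term `f(t)` of `d`, where `w` is a fresh variable and in each body
the value variable is renamed to `w` and the remaining variables are
existentially quantified. -/
def compDef (w : ℕ) (d : Term σ × List (ℕ × Conj σ)) : Formula σ :=
  Formula.all w ((Formula.eq d.1 (.var w)).iff
    (bigOr (d.2.map fun r =>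
      let b := conjSubst r.1 (.var w) r.2
      exN ((conjVarList b).filter (· ≠ w)) (conjToFormula b))))

/-- The sentence `¬∃x G` of the completion for a constraint `⊥ ← G`. -/
def compConstraint (b : Conj σ) : Formula σ :=
  (exN (conjVarList b) (conjToFormula b)).not

/-- The completion of a program (using the fresh variable `w`). -/
def completion (P : Program σ) (w : ℕ) : Formula σ :=
  bigAnd (P.defs.map (compDef w) ++ P.constraints.map compConstraint)

/-- The substitution process of the variable elimination method, run to a
variable-free conjunction. -/
def ReachesGround (L L' : Conj σ) : Prop :=
  Relation.ReflTransGen SubstStep L L' ∧ conjVars L' = ∅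

/-- The substitution process of the variable elimination method on an implication
`B → (f = v)`, run to a variable-free result. -/
def ReachesGround8 (B : Conj σ) (v : ℕ) (S : State8 σ) : Prop :=
  Relation.ReflTransGen SubstStep8 (B, Term.var v) S ∧ vars8 S = ∅

/-- The result of applying the variable elimination method to the equivalence of
the completion for the group `d = (f, rules)`:
`F := F₁ ∨ … ∨ Fₖ` where `Fᵢ` is obtained from `Bᵢ` by substituting the head term
`f` for the value variable and running the substitution process to a variable-free
conjunction; `G := G₁ ∧ … ∧ Gₖ` where `Gᵢ` is obtained by running the substitution
process on `Bᵢ → (f = v)` to a variable-free implication; the result is `F ∧ G`. -/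
def ElimDef (d : Term σ × List (ℕ × Conj σ)) (E : Formula σ) : Prop :=
  ∃ Fs : List (Conj σ), ∃ Gs : List (State8 σ),
    List.Forall₂ (fun r F => ReachesGround (conjSubst r.1 d.1 r.2) F) d.2 Fs ∧
    List.Forall₂ (fun r S => ReachesGround8 r.2 r.1 S) d.2 Gs ∧
    E = (bigOr (Fs.map conjToFormula)).and
        (bigAnd (Gs.map fun S => (conjToFormula S.1).imp (Formula.eq d.1 S.2)))

/-- The result of applying the variable elimination method to the conjunctive term
`¬∃x G` of the completion coming from a constraint `⊥ ← G`. -/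
def ElimConstraint (b : Conj σ) (C : Formula σ) : Prop :=
  ∃ b', ReachesGround b b' ∧ C = (conjToFormula b').not

/-- The result of applying the variable elimination method repeatedly to each
equivalence (and each constraint term) of the completion of the program. -/
def MethodResult (P : Program σ) (C : Formula σ) : Prop :=
  ∃ Es Cs : List (Formula σ),
    List.Forall₂ ElimDef P.defs Es ∧
    List.Forall₂ ElimConstraint P.constraints Cs ∧
    C = bigAnd (Es ++ Cs)

end ASPMT

namespace ASPMT

variable {σ : Signature}

/-! ### Basic lemmas about terms, substitution, evaluation -/

theorem Term.eval_subst (I : Interp σ) (ν : ℕ → I.M) (x : ℕ) (t : Term σ) (s : Term σ) :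
    (s.subst x t).eval I ν = s.eval I (updAssign ν x (t.eval I ν)) := by
  induction s with
  | var y => by_cases h : y = x <;> simp [Term.subst, Term.eval, updAssign, h]
  | app f ts ih =>
      simp only [Term.subst, Term.eval]
      congr 1; funext i; exact ih i

theorem Term.eval_congr {I : Interp σ} {ν ν' : ℕ → I.M} (s : Term σ)
    (h : ∀ y ∈ s.vars, ν y = ν' y) : s.eval I ν = s.eval I ν' := by
  induction s with
  | var y => exact h y (by simp [Term.vars])
  | app f ts ih =>
      simp only [Term.eval]
      congr 1; funext i
      exact ih i fun y hy => h y (by simp only [Term.vars, Set.mem_iUnion]; exact ⟨i, hy⟩)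

theorem Term.eval_ground {I : Interp σ} {s : Term σ} (h : s.vars = ∅) (ν ν' : ℕ → I.M) :
    s.eval I ν = s.eval I ν' :=
  Term.eval_congr s (by simp [h])

theorem Term.vars_subst (x : ℕ) (t : Term σ) (s : Term σ) :
    (s.subst x t).vars ⊆ (s.vars \ {x}) ∪ t.vars := by
  induction s with
  | var y =>
      by_cases h : y = x
      · simp [Term.subst, Term.vars, h]
      · simp only [Term.subst, if_neg h]
        intro z hz; simp only [Term.vars, Set.mem_singleton_iff] at hz; subst hz
        simp [Term.vars, h]
  | app f ts ih =>
      intro z hz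
      simp only [Term.subst, Term.vars, Set.mem_iUnion] at hz
      obtain ⟨i, hi⟩ := hz
      rcases ih i hi with h | h
      · exact Or.inl ⟨by simp only [Term.vars, Set.mem_iUnion]; exact ⟨i, h.1⟩, h.2⟩
      · exact Or.inr h

theorem Term.vars_subst_ground {x : ℕ} {t : Term σ} (ht : t.vars = ∅) (s : Term σ) :
    (s.subst x t).vars ⊆ s.vars \ {x} := by
  have := Term.vars_subst x t s
  rwa [ht, Set.union_empty] at this

theorem Term.subst_eq_var {x : ℕ} {t : Term σ} (ht : t.vars = ∅) {a : Term σ} {v : ℕ}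
    (h : a.subst x t = Term.var v) : a = Term.var v ∧ v ≠ x := by
  cases a with
  | var y =>
      by_cases hy : y = x
      · rw [Term.subst, if_pos hy] at h
        subst h
        simp [Term.vars] at ht
      · rw [Term.subst, if_neg hy] at h
        cases h
        exact ⟨rfl, hy⟩
  | app f ts => simp [Term.subst] at h

end ASPMT
namespace ASPMT

variable {σ : Signature}

/-! ### Atom / literal / conjunction lemmas -/

theorem Atom.satA_subst (I : Interp σ) (ν : ℕ → I.M) (x : ℕ) (t : Term σ) (A : Atom σ) :
    (A.subst x t).SatA I ν ↔ A.SatA I (updAssign ν x (t.eval I ν)) := by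
  cases A with
  | eq a b => simp [Atom.subst, Atom.SatA, Term.eval_subst]
  | pred p ts => simp [Atom.subst, Atom.SatA, Term.eval_subst]

theorem Lit.satL_subst (I : Interp σ) (ν : ℕ → I.M) (x : ℕ) (t : Term σ) (l : Lit σ) :
    (l.subst x t).SatL I ν ↔ l.SatL I (updAssign ν x (t.eval I ν)) := by
  unfold Lit.SatL Lit.subst
  cases l.pos <;> simp [Atom.satA_subst]

theorem satConj_subst (I : Interp σ) (ν : ℕ → I.M) (x : ℕ) (t : Term σ) (L : Conj σ) :
    SatConj I ν (conjSubst x t L) ↔ SatConj I (updAssign ν x (t.eval I ν)) L := by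
  unfold SatConj conjSubst
  constructor
  · intro h l hl
    exact (Lit.satL_subst I ν x t l).mp (h _ (List.mem_map_of_mem hl))
  · intro h l hl
    obtain ⟨l', hl', rfl⟩ := List.mem_map.mp hl
    exact (Lit.satL_subst I ν x t l').mpr (h l' hl')

theorem Atom.satA_congr {I : Interp σ} {ν ν' : ℕ → I.M} (A : Atom σ)
    (h : ∀ y ∈ A.vars, ν y = ν' y) : A.SatA I ν ↔ A.SatA I ν' := by
  cases A with
  | eq a b =>
      simp only [Atom.SatA]
      rw [Term.eval_congr a fun y hy => h y (Or.inl hy),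
        Term.eval_congr b fun y hy => h y (Or.inr hy)]
  | pred p ts =>
      simp only [Atom.SatA]
      have : (fun i => (ts i).eval I ν) = fun i => (ts i).eval I ν' := by
        funext i
        exact Term.eval_congr (ts i) fun y hy =>
          h y (by simp only [Atom.vars, Set.mem_iUnion]; exact ⟨i, hy⟩)
      rw [this]

theorem Lit.satL_congr {I : Interp σ} {ν ν' : ℕ → I.M} (l : Lit σ)
    (h : ∀ y ∈ l.vars, ν y = ν' y) : l.SatL I ν ↔ l.SatL I ν' := by
  unfold Lit.SatL
  cases l.pos <;> simp [Atom.satA_congr l.atom h]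

theorem satConj_congr {I : Interp σ} {ν ν' : ℕ → I.M} {L : Conj σ}
    (h : ∀ y ∈ conjVars L, ν y = ν' y) : SatConj I ν L ↔ SatConj I ν' L := by
  unfold SatConj
  exact forall₂_congr fun l hl => Lit.satL_congr l fun y hy => h y ⟨l, hl, hy⟩

theorem satConj_ground {I : Interp σ} {L : Conj σ} (h : conjVars L = ∅) (ν ν' : ℕ → I.M) :
    SatConj I ν L ↔ SatConj I ν' L :=
  satConj_congr (by simp [h])

/-! ### vars of substituted atoms, literals, conjunctions -/

theorem Atom.vars_subst_ground {x : ℕ} {t : Term σ} (ht : t.vars = ∅) (A : Atom σ) :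
    (A.subst x t).vars ⊆ A.vars \ {x} := by
  cases A with
  | eq a b =>
      intro z hz
      rcases hz with hz | hz
      · rcases Term.vars_subst_ground ht a hz with ⟨h1, h2⟩
        exact ⟨Or.inl h1, h2⟩
      · rcases Term.vars_subst_ground ht b hz with ⟨h1, h2⟩
        exact ⟨Or.inr h1, h2⟩
  | pred p ts =>
      intro z hz
      simp only [Atom.subst, Atom.vars, Set.mem_iUnion] at hz
      obtain ⟨i, hi⟩ := hz
      rcases Term.vars_subst_ground ht (ts i) hi with ⟨h1, h2⟩
      exact ⟨by simp only [Atom.vars, Set.mem_iUnion]; exact ⟨i, h1⟩, h2⟩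

theorem conjVars_subst_ground {x : ℕ} {t : Term σ} (ht : t.vars = ∅) (L : Conj σ) :
    conjVars (conjSubst x t L) ⊆ conjVars L \ {x} := by
  intro z hz
  obtain ⟨l', hl', hzl⟩ := hz
  obtain ⟨l, hl, rfl⟩ := List.mem_map.mp hl'
  rcases Atom.vars_subst_ground ht l.atom hzl with ⟨h1, h2⟩
  exact ⟨⟨l, hl, h1⟩, h2⟩

end ASPMT
namespace ASPMT

variable {σ : Signature}

/-! ### varList vs vars -/

theorem mem_foldr_append {ι : Type*} {y : ℕ} (L : ι → List ℕ) (l : List ι) :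
    y ∈ l.foldr (fun i acc => L i ++ acc) [] ↔ ∃ i ∈ l, y ∈ L i := by
  induction l with
  | nil => simp
  | cons a l ih => simp [ih]

theorem Term.mem_varList {y : ℕ} (s : Term σ) : y ∈ s.varList ↔ y ∈ s.vars := by
  induction s with
  | var x => simp [Term.varList, Term.vars]
  | app f ts ih =>
      simp only [Term.varList, Term.vars, Set.mem_iUnion, mem_foldr_append]
      constructor
      · rintro ⟨i, _, hi⟩; exact ⟨i, (ih i).mp hi⟩
      · rintro ⟨i, hi⟩; exact ⟨i, List.mem_finRange i, (ih i).mpr hi⟩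

theorem Atom.mem_varList {y : ℕ} (A : Atom σ) : y ∈ A.varList ↔ y ∈ A.vars := by
  cases A with
  | eq a b => simp [Atom.varList, Atom.vars, Term.mem_varList]
  | pred p ts =>
      simp only [Atom.varList, Atom.vars, Set.mem_iUnion, mem_foldr_append]
      constructor
      · rintro ⟨i, _, hi⟩; exact ⟨i, (Term.mem_varList _).mp hi⟩
      · rintro ⟨i, hi⟩; exact ⟨i, List.mem_finRange i, (Term.mem_varList _).mpr hi⟩

theorem mem_conjVarList {y : ℕ} (L : Conj σ) : y ∈ conjVarList L ↔ y ∈ conjVars L := by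
  unfold conjVarList conjVars
  induction L with
  | nil => simp
  | cons l L ih =>
      simp only [List.foldr_cons, List.mem_append, ih, Set.mem_setOf_eq, List.mem_cons]
      constructor
      · rintro (h | ⟨l', hl', hy⟩)
        · exact ⟨l, Or.inl rfl, (Atom.mem_varList _).mp h⟩
        · exact ⟨l', Or.inr hl', hy⟩
      · rintro ⟨l', (rfl | hl'), hy⟩
        · exact Or.inl ((Atom.mem_varList _).mpr hy)
        · exact Or.inr ⟨l', hl', hy⟩

theorem conjVars_finite (L : Conj σ) : (conjVars L).Finite := by
  apply Set.Finite.subset (List.finite_toSet (conjVarList L))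
  intro y hy
  exact (mem_conjVarList L).mpr hy

/-! ### Satisfaction of big conjunctions / disjunctions / exN -/

theorem sat_bigAnd (I : Interp σ) (ν : ℕ → I.M) (l : List (Formula σ)) :
    (bigAnd l).Sat I ν ↔ ∀ F ∈ l, F.Sat I ν := by
  induction l with
  | nil => simp [bigAnd, verum, Formula.Sat]
  | cons F l ih => simp [bigAnd, Formula.Sat, ih.symm]

theorem sat_bigOr (I : Interp σ) (ν : ℕ → I.M) (l : List (Formula σ)) :
    (bigOr l).Sat I ν ↔ ∃ F ∈ l, F.Sat I ν := by
  induction l with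
  | nil => simp [bigOr, Formula.Sat]
  | cons F l ih => simp [bigOr, Formula.Sat, ih.symm]

theorem sat_not (I : Interp σ) (ν : ℕ → I.M) (F : Formula σ) :
    F.not.Sat I ν ↔ ¬ F.Sat I ν := by
  simp [Formula.not, Formula.Sat]

theorem Atom.sat_toFormula (I : Interp σ) (ν : ℕ → I.M) (A : Atom σ) :
    A.toFormula.Sat I ν ↔ A.SatA I ν := by
  cases A <;> simp [Atom.toFormula, Formula.Sat, Atom.SatA]

theorem Lit.sat_toFormula (I : Interp σ) (ν : ℕ → I.M) (l : Lit σ) :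
    l.toFormula.Sat I ν ↔ l.SatL I ν := by
  unfold Lit.toFormula Lit.SatL
  cases l.pos <;> simp [sat_not, Atom.sat_toFormula]

theorem sat_conjToFormula (I : Interp σ) (ν : ℕ → I.M) (L : Conj σ) :
    (conjToFormula L).Sat I ν ↔ SatConj I ν L := by
  unfold conjToFormula SatConj
  rw [sat_bigAnd]
  constructor
  · intro h l hl
    exact (Lit.sat_toFormula I ν l).mp (h _ (List.mem_map_of_mem hl))
  · intro h F hF
    obtain ⟨l, hl, rfl⟩ := List.mem_map.mp hF
    exact (Lit.sat_toFormula I ν l).mpr (h l hl)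

theorem sat_exN (I : Interp σ) (ν : ℕ → I.M) (xs : List ℕ) (F : Formula σ) :
    (exN xs F).Sat I ν ↔ ∃ g : ℕ → I.M, F.Sat I g ∧ ∀ y ∉ xs, g y = ν y := by
  induction xs generalizing ν with
  | nil =>
      constructor
      · intro h; exact ⟨ν, h, fun _ _ => rfl⟩
      · rintro ⟨g, hg, hgν⟩
        have : g = ν := funext fun y => hgν y (by simp)
        rwa [this] at hg
  | cons x xs ih =>
      show (∃ a, (exN xs F).Sat I (updAssign ν x a)) ↔ _
      constructor
      · rintro ⟨a, ha⟩
        obtain ⟨g, hg, hoff⟩ := (ih (updAssign ν x a)).mp ha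
        refine ⟨g, hg, fun y hy => ?_⟩
        have hyx : y ≠ x := fun h => hy (h ▸ List.mem_cons_self (a := x) (l := xs))
        have hyxs : y ∉ xs := fun h => hy (List.mem_cons_of_mem x h)
        rw [hoff y hyxs, updAssign, if_neg hyx]
      · rintro ⟨g, hg, hoff⟩
        refine ⟨g x, (ih (updAssign ν x (g x))).mpr ⟨g, hg, fun y hy => ?_⟩⟩
        by_cases hyx : y = x
        · subst hyx; simp [updAssign]
        · rw [updAssign, if_neg hyx]
          exact hoff y (fun h => (by rcases List.mem_cons.mp h with h|h; exact hyx h; exact hy h))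

end ASPMT
namespace ASPMT

variable {σ : Signature}

/-! ### free variables of built formulas -/

theorem Atom.fv_toFormula (A : Atom σ) : A.toFormula.fv = A.vars := by
  cases A <;> simp [Atom.toFormula, Formula.fv, Atom.vars]

theorem Lit.fv_toFormula (l : Lit σ) : l.toFormula.fv = l.vars := by
  unfold Lit.toFormula Lit.vars
  cases l.pos <;> simp [Formula.not, Formula.fv, Atom.fv_toFormula]

theorem fv_bigAnd_empty {l : List (Formula σ)} (h : ∀ F ∈ l, F.fv = ∅) :
    (bigAnd l).fv = ∅ := by
  induction l with
  | nil => simp [bigAnd, verum, Formula.fv]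
  | cons F l ih =>
      show (F.and (bigAnd l)).fv = ∅
      simp only [Formula.fv]
      rw [h F (List.mem_cons_self (a := F) (l := l)), ih fun G hG => h G (List.mem_cons_of_mem F hG)]
      simp

theorem fv_bigOr_empty {l : List (Formula σ)} (h : ∀ F ∈ l, F.fv = ∅) :
    (bigOr l).fv = ∅ := by
  induction l with
  | nil => simp [bigOr, Formula.fv]
  | cons F l ih =>
      show (F.or (bigOr l)).fv = ∅
      simp only [Formula.fv]
      rw [h F (List.mem_cons_self (a := F) (l := l)), ih fun G hG => h G (List.mem_cons_of_mem F hG)]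
      simp

theorem fv_conjToFormula (L : Conj σ) : (conjToFormula L).fv ⊆ conjVars L := by
  unfold conjToFormula
  induction L with
  | nil => simp [bigAnd, verum, Formula.fv]
  | cons l L ih =>
      show ((l.toFormula).and (bigAnd (L.map Lit.toFormula))).fv ⊆ _
      simp only [Formula.fv]
      intro y hy
      rcases hy with hy | hy
      · rw [Lit.fv_toFormula] at hy
        exact ⟨l, List.mem_cons_self (a := l) (l := L), hy⟩
      · obtain ⟨l', hl', hyl⟩ := ih hy
        exact ⟨l', List.mem_cons_of_mem l hl', hyl⟩

theorem fv_conjToFormula_empty {L : Conj σ} (h : conjVars L = ∅) :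
    (conjToFormula L).fv = ∅ :=
  Set.eq_empty_of_subset_empty (h ▸ fv_conjToFormula L)

/-! ### the one-step semantic lemmas -/

/-- A satisfied positive equality conjunct `x = t` (or `t = x`) forces the value of `x`. -/
theorem forced_value {I : Interp σ} {ν : ℕ → I.M} {L : Conj σ} {x : ℕ} {t : Term σ}
    (hsat : SatConj I ν L) {l : Lit σ} (hl : l ∈ L) (hpos : l.pos = true)
    (he : l.atom = .eq (.var x) t ∨ l.atom = .eq t (.var x)) :
    ν x = t.eval I ν := by
  have h := hsat l hl
  unfold Lit.SatL at h
  rw [hpos, if_pos rfl] at h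
  rcases he with he | he <;> rw [he] at h
  · simpa [Atom.SatA, Term.eval] using h
  · simp only [Atom.SatA, Term.eval] at h
    exact h.symm

/-- The substituted variable does not occur in the substituting term. -/
theorem x_not_mem_subst {L : Conj σ} {x : ℕ} {t : Term σ}
    (hlit : ∃ l ∈ L, l.pos = true ∧ (l.atom = .eq (.var x) t ∨ l.atom = .eq t (.var x)))
    (hside : ∀ u ∈ t.vars, ¬ dependsOn L u x) : x ∉ t.vars := by
  intro hx
  obtain ⟨l, hl, hpos, he⟩ := hlit
  exact hside x hx (Relation.TransGen.single ⟨l, hl, hpos, t, he, hx⟩)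

theorem satConj_exists_step {L L' : Conj σ} (h : SubstStep L L') (I : Interp σ) :
    (∃ g : ℕ → I.M, SatConj I g L) ↔ ∃ g : ℕ → I.M, SatConj I g L' := by
  obtain ⟨x, hx, t, hlit, hside, rfl⟩ := h
  have hxt : x ∉ t.vars := x_not_mem_subst hlit hside
  constructor
  · rintro ⟨g, hg⟩
    obtain ⟨l, hl, hpos, he⟩ := hlit
    have hv : g x = t.eval I g := forced_value hg hl hpos he
    have hupd : updAssign g x (t.eval I g) = g := by
      funext y
      unfold updAssign
      split
      · next hyx => subst hyx; exact hv.symm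
      · rfl
    refine ⟨g, (satConj_subst I g x t L).mpr ?_⟩
    rwa [hupd]
  · rintro ⟨g, hg⟩
    exact ⟨updAssign g x (t.eval I g), (satConj_subst I g x t L).mp hg⟩

theorem satConj_exists_chain {L L' : Conj σ} (h : Relation.ReflTransGen SubstStep L L')
    (I : Interp σ) : (∃ g : ℕ → I.M, SatConj I g L) ↔ ∃ g : ℕ → I.M, SatConj I g L' := by
  induction h with
  | refl => rfl
  | tail _ hstep ih => exact ih.trans (satConj_exists_step hstep I)

theorem reachesGround_sat {L L' : Conj σ} (h : ReachesGround L L') (I : Interp σ)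
    (ν : ℕ → I.M) : (∃ g : ℕ → I.M, SatConj I g L) ↔ SatConj I ν L' := by
  rw [satConj_exists_chain h.1 I]
  constructor
  · rintro ⟨g, hg⟩; exact (satConj_ground h.2 g ν).mp hg
  · intro hν; exact ⟨ν, hν⟩

theorem state8_step {S S' : State8 σ} (h : SubstStep8 S S') (I : Interp σ)
    (P : I.M → Prop) :
    (∀ g, SatConj I g S.1 → P (S.2.eval I g)) ↔
    (∀ g, SatConj I g S'.1 → P (S'.2.eval I g)) := by
  obtain ⟨x, hx, t, hlit, hside, hS'⟩ := h
  have hxt : x ∉ t.vars := x_not_mem_subst hlit hside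
  constructor
  · intro hall g hg
    rw [hS'] at hg ⊢
    have hg2 : SatConj I (updAssign g x (t.eval I g)) S.1 :=
      (satConj_subst I g x t S.1).mp hg
    have := hall _ hg2
    rwa [← Term.eval_subst] at this
  · intro hall g hg
    obtain ⟨l, hl, hpos, he⟩ := hlit
    have hv : g x = t.eval I g := forced_value hg hl hpos he
    have hupd : updAssign g x (t.eval I g) = g := by
      funext y
      unfold updAssign
      split
      · next hyx => subst hyx; exact hv.symm
      · rfl
    have hg' : SatConj I g S'.1 := by
      rw [hS']
      refine (satConj_subst I g x t S.1).mpr ?_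
      rwa [hupd]
    have := hall g hg'
    rw [hS'] at this
    rwa [Term.eval_subst, hupd] at this

theorem state8_chain {S S' : State8 σ} (h : Relation.ReflTransGen SubstStep8 S S')
    (I : Interp σ) (P : I.M → Prop) :
    (∀ g, SatConj I g S.1 → P (S.2.eval I g)) ↔
    (∀ g, SatConj I g S'.1 → P (S'.2.eval I g)) := by
  induction h with
  | refl => rfl
  | tail _ hstep ih => exact ih.trans (state8_step hstep I P)

end ASPMT
namespace ASPMT

variable {σ : Signature}

/-! ### Existence of the substitution process runs -/

open Classical in
theorem exists_sink (L : Conj σ) (hacy : AcyclicDeps L) :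
    ∀ (n : ℕ) (S : Finset ℕ), S.card ≤ n → S.Nonempty →
      (∀ y ∈ S, ∀ z, depEdgeC L y z → z ∈ S) →
      ∃ x ∈ S, ∀ u, ¬ depEdgeC L x u := by
  intro n
  induction n with
  | zero =>
      intro S hcard hne _
      obtain ⟨x, hx⟩ := hne
      simp [Finset.card_eq_zero.mp (Nat.le_zero.mp hcard)] at hx
  | succ n ih =>
      intro S hcard hne hcl
      obtain ⟨x₀, hx₀⟩ := hne
      by_cases hE : ∀ u, ¬ depEdgeC L x₀ u
      · exact ⟨x₀, hx₀, hE⟩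
      · push_neg at hE
        obtain ⟨u, hu⟩ := hE
        set S' : Finset ℕ := S.filter (fun y => dependsOn L x₀ y) with hS'
        have hu' : u ∈ S' := by
          rw [hS', Finset.mem_filter]
          exact ⟨hcl x₀ hx₀ u hu, Relation.TransGen.single hu⟩
        have hx₀notin : x₀ ∉ S' := by
          rw [hS', Finset.mem_filter]
          rintro ⟨-, hdep⟩
          exact hacy x₀ hdep
        have hss : S' ⊂ S := ⟨Finset.filter_subset _ _, fun hsub => hx₀notin (hsub hx₀)⟩
        have hcard' : S'.card ≤ n := by
          have := Finset.card_lt_card hss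
          omega
        have hcl' : ∀ y ∈ S', ∀ z, depEdgeC L y z → z ∈ S' := by
          intro y hy z hz
          rw [hS', Finset.mem_filter] at hy ⊢
          exact ⟨hcl y hy.1 z hz, hy.2.tail hz⟩
        obtain ⟨x, hxS', hxsink⟩ := ih S' hcard' ⟨u, hu'⟩ hcl'
        exact ⟨x, (Finset.filter_subset _ _) hxS', hxsink⟩

theorem depEdgeC_mem_conjVars {L : Conj σ} {y z : ℕ} (h : depEdgeC L y z) :
    z ∈ conjVars L := by
  obtain ⟨l, hl, hpos, t, he, hz⟩ := h
  refine ⟨l, hl, ?_⟩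
  unfold Lit.vars
  rcases he with he | he <;> rw [he]
  · exact Or.inr hz
  · exact Or.inl hz

open Classical in
theorem exists_sink_conjVars {L : Conj σ} (hacy : AcyclicDeps L)
    (hne : conjVars L ≠ ∅) :
    ∃ x ∈ conjVars L, ∀ u, ¬ depEdgeC L x u := by
  set S : Finset ℕ := (conjVarList L).toFinset with hS
  have hmem : ∀ y, y ∈ S ↔ y ∈ conjVars L := by
    intro y; rw [hS, List.mem_toFinset]; exact mem_conjVarList L
  have hne' : S.Nonempty := by
    obtain ⟨x, hx⟩ := Set.nonempty_iff_ne_empty.mpr hne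
    exact ⟨x, (hmem x).mpr hx⟩
  obtain ⟨x, hxS, hsink⟩ := exists_sink L hacy S.card S le_rfl hne'
    (fun y _ z hz => (hmem z).mpr (depEdgeC_mem_conjVars hz))
  exact ⟨x, (hmem x).mp hxS, hsink⟩

theorem isolator_mem_conjVars {L : Conj σ} {x : ℕ} {l : Lit σ} (hl : l ∈ L)
    (hiso : isolator x l) : x ∈ conjVars L := by
  obtain ⟨hpos, t, he⟩ := hiso
  refine ⟨l, hl, ?_⟩
  unfold Lit.vars
  rcases he with he | he <;> rw [he]
  · exact Or.inl (by simp [Term.vars])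
  · exact Or.inr (by simp [Term.vars])

/-- Inversion of atom substitution producing an equality atom. -/
theorem Atom.subst_eq_eq {A : Atom σ} {x : ℕ} {t c d : Term σ}
    (h : A.subst x t = .eq c d) :
    ∃ a b, A = .eq a b ∧ a.subst x t = c ∧ b.subst x t = d := by
  cases A with
  | eq a b =>
      rw [Atom.subst] at h
      injection h with h1 h2
      exact ⟨a, b, rfl, h1, h2⟩
  | pred p ts => simp [Atom.subst] at h

/-- For ground `t`, substitution does not create new dependency edges. -/
theorem depEdgeC_subst_ground {L : Conj σ} {x : ℕ} {t : Term σ} (ht : t.vars = ∅)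
    {v u : ℕ} (h : depEdgeC (conjSubst x t L) v u) : depEdgeC L v u := by
  obtain ⟨l', hl', hpos', s', he', hu'⟩ := h
  obtain ⟨l, hl, rfl⟩ := List.mem_map.mp hl'
  have hpos : l.pos = true := hpos'
  rcases he' with he' | he'
  · obtain ⟨a, b, hab, ha, hb⟩ := Atom.subst_eq_eq he'
    obtain ⟨rfl, hvx⟩ := Term.subst_eq_var ht ha
    refine ⟨l, hl, hpos, b, Or.inl hab, ?_⟩
    have := Term.vars_subst_ground ht b (hb ▸ hu')
    exact this.1
  · obtain ⟨a, b, hab, ha, hb⟩ := Atom.subst_eq_eq he'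
    obtain ⟨rfl, hvx⟩ := Term.subst_eq_var ht hb
    refine ⟨l, hl, hpos, a, Or.inr hab, ?_⟩
    have := Term.vars_subst_ground ht a (ha ▸ hu')
    exact this.1

theorem acyclic_subst_ground {L : Conj σ} {x : ℕ} {t : Term σ} (ht : t.vars = ∅)
    (hacy : AcyclicDeps L) : AcyclicDeps (conjSubst x t L) := by
  intro v hv
  exact hacy v (Relation.TransGen.mono (fun a b => depEdgeC_subst_ground ht) v v hv)

theorem isolators_subst_ground {L : Conj σ} {x : ℕ} {t : Term σ} (ht : t.vars = ∅)
    (hisoL : ∀ y ∈ conjVars L, ∃ l ∈ L, isolator y l) :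
    ∀ y ∈ conjVars (conjSubst x t L), ∃ l ∈ conjSubst x t L, isolator y l := by
  intro y hy
  obtain ⟨hyL, hyx⟩ := conjVars_subst_ground ht L hy
  obtain ⟨l, hl, hpos, s, he⟩ := hisoL y hyL
  refine ⟨l.subst x t, List.mem_map_of_mem hl, hpos, s.subst x t, ?_⟩
  have hyx' : y ≠ x := hyx
  rcases he with he | he
  · left
    show (l.subst x t).atom = _
    unfold Lit.subst
    rw [he, Atom.subst, Term.subst, if_neg hyx']
  · right
    show (l.subst x t).atom = _
    unfold Lit.subst
    rw [he, Atom.subst, Term.subst, if_neg hyx']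

end ASPMT
namespace ASPMT

variable {σ : Signature}

/-- The invariant maintained by the substitution process on a conjunction. -/
def Inv (L : Conj σ) : Prop :=
  (∀ y ∈ conjVars L, ∃ l ∈ L, isolator y l) ∧ AcyclicDeps L

theorem exists_ground_step {L : Conj σ} (hinv : Inv L) (hne : conjVars L ≠ ∅) :
    ∃ x ∈ conjVars L, ∃ t : Term σ, t.vars = ∅ ∧
      SubstStep L (conjSubst x t L) ∧ Inv (conjSubst x t L) ∧
      conjVars (conjSubst x t L) ⊆ conjVars L \ {x} := by
  obtain ⟨hisoL, hacy⟩ := hinv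
  obtain ⟨x, hx, hsink⟩ := exists_sink_conjVars hacy hne
  obtain ⟨l, hl, hpos, t, he⟩ := hisoL x hx
  have ht : t.vars = ∅ := by
    by_contra hne'
    obtain ⟨u, hu⟩ := Set.nonempty_iff_ne_empty.mpr hne'
    exact hsink u ⟨l, hl, hpos, t, he, hu⟩
  refine ⟨x, hx, t, ht, ?_, ?_, conjVars_subst_ground ht L⟩
  · exact ⟨x, hx, t, ⟨l, hl, hpos, he⟩, fun u hu => by rw [ht] at hu; exact absurd hu (Set.notMem_empty u), rfl⟩
  · exact ⟨isolators_subst_ground ht hisoL, acyclic_subst_ground ht hacy⟩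

theorem exists_reachesGround_aux :
    ∀ (n : ℕ) (L : Conj σ), (conjVars L).ncard ≤ n → Inv L →
      ∃ L', ReachesGround L L' := by
  intro n
  induction n with
  | zero =>
      intro L hcard _
      refine ⟨L, Relation.ReflTransGen.refl, ?_⟩
      have := (Set.ncard_eq_zero (conjVars_finite L)).mp (Nat.le_zero.mp hcard)
      exact this
  | succ n ih =>
      intro L hcard hinv
      by_cases hne : conjVars L = ∅
      · exact ⟨L, Relation.ReflTransGen.refl, hne⟩
      · obtain ⟨x, hx, t, ht, hstep, hinv', hsub⟩ := exists_ground_step hinv hne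
        have hss : conjVars (conjSubst x t L) ⊂ conjVars L :=
          ⟨hsub.trans Set.diff_subset, fun hcontra =>
            ((hsub (hcontra hx)).2 rfl)⟩
        have hlt : (conjVars (conjSubst x t L)).ncard < (conjVars L).ncard :=
          Set.ncard_lt_ncard hss (conjVars_finite L)
        obtain ⟨L', hL', hg⟩ := ih (conjSubst x t L) (by omega) hinv'
        exact ⟨L', Relation.ReflTransGen.head hstep hL', hg⟩

theorem exists_reachesGround {L : Conj σ} (hinv : Inv L) : ∃ L', ReachesGround L L' :=
  exists_reachesGround_aux (conjVars L).ncard L le_rfl hinv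

/-- The invariant for the implication form. -/
def Inv8 (S : State8 σ) : Prop :=
  (∀ y ∈ vars8 S, ∃ l ∈ S.1, isolator y l) ∧ AcyclicDeps S.1

theorem vars8_subset {S : State8 σ} (hinv : Inv8 S) : vars8 S ⊆ conjVars S.1 := by
  intro y hy
  obtain ⟨l, hl, hiso⟩ := hinv.1 y hy
  exact isolator_mem_conjVars hl hiso

theorem exists_reachesGround8_aux :
    ∀ (n : ℕ) (S : State8 σ), (conjVars S.1).ncard ≤ n → Inv8 S →
      ∃ S', Relation.ReflTransGen SubstStep8 S S' ∧ vars8 S' = ∅ := by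
  intro n
  induction n with
  | zero =>
      intro S hcard hinv
      refine ⟨S, Relation.ReflTransGen.refl, ?_⟩
      have h0 : conjVars S.1 = ∅ := (Set.ncard_eq_zero (conjVars_finite S.1)).mp (Nat.le_zero.mp hcard)
      have := vars8_subset hinv
      rw [h0] at this
      exact Set.eq_empty_of_subset_empty this
  | succ n ih =>
      intro S hcard hinv
      by_cases hne : conjVars S.1 = ∅
      · refine ⟨S, Relation.ReflTransGen.refl, ?_⟩
        have := vars8_subset hinv
        rw [hne] at this
        exact Set.eq_empty_of_subset_empty this
      · obtain ⟨hisoL, hacy⟩ := hinv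
        obtain ⟨x, hx, hsink⟩ := exists_sink_conjVars hacy hne
        have hx8 : x ∈ vars8 S := Or.inl hx
        obtain ⟨l, hl, hpos, t, he⟩ := hisoL x hx8
        have ht : t.vars = ∅ := by
          by_contra hne'
          obtain ⟨u, hu⟩ := Set.nonempty_iff_ne_empty.mpr hne'
          exact hsink u ⟨l, hl, hpos, t, he, hu⟩
        set S' : State8 σ := (conjSubst x t S.1, S.2.subst x t) with hS'
        have hstep : SubstStep8 S S' :=
          ⟨x, hx8, t, ⟨l, hl, hpos, he⟩,
            fun u hu => by rw [ht] at hu; exact absurd hu (Set.notMem_empty u), rfl⟩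
        have hsub : conjVars S'.1 ⊆ conjVars S.1 \ {x} := conjVars_subst_ground ht S.1
        have hinv' : Inv8 S' := by
          constructor
          · intro y hy
            have hyy : y ∈ conjVars S.1 \ {x} ∨ y ∈ S.2.vars \ {x} := by
              rcases hy with hy | hy
              · exact Or.inl (hsub hy)
              · exact Or.inr (Term.vars_subst_ground ht S.2 hy)
            have hyS : y ∈ vars8 S ∧ y ≠ x := by
              rcases hyy with ⟨h1, h2⟩ | ⟨h1, h2⟩
              · exact ⟨Or.inl h1, h2⟩
              · exact ⟨Or.inr h1, h2⟩
            obtain ⟨l₁, hl₁, hpos₁, s₁, he₁⟩ := hisoL y hyS.1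
            refine ⟨l₁.subst x t, List.mem_map_of_mem hl₁, hpos₁, s₁.subst x t, ?_⟩
            have hyx' : y ≠ x := hyS.2
            rcases he₁ with he₁ | he₁
            · left
              show (l₁.subst x t).atom = _
              unfold Lit.subst
              rw [he₁, Atom.subst, Term.subst, if_neg hyx']
            · right
              show (l₁.subst x t).atom = _
              unfold Lit.subst
              rw [he₁, Atom.subst, Term.subst, if_neg hyx']
          · exact acyclic_subst_ground ht hacy
        have hss : conjVars S'.1 ⊂ conjVars S.1 :=
          ⟨hsub.trans Set.diff_subset, fun hcontra => ((hsub (hcontra hx)).2 rfl)⟩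
        have hlt : (conjVars S'.1).ncard < (conjVars S.1).ncard :=
          Set.ncard_lt_ncard hss (conjVars_finite S.1)
        obtain ⟨S'', hS'', hg⟩ := ih S' (by omega) hinv'
        exact ⟨S'', Relation.ReflTransGen.head hstep hS'', hg⟩

theorem exists_reachesGround8 {B : Conj σ} {v : ℕ}
    (hinv : Inv8 (B, Term.var v)) : ∃ S, ReachesGround8 B v S :=
  exists_reachesGround8_aux (conjVars B).ncard (B, Term.var v) le_rfl hinv

end ASPMT
namespace ASPMT

variable {σ : Signature}

/-! ### Forall₂ helpers -/

theorem forall₂_exists {α β : Type*} {R : α → β → Prop} :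
    ∀ {l : List α}, (∀ a ∈ l, ∃ b, R a b) → ∃ l', List.Forall₂ R l l' := by
  intro l
  induction l with
  | nil => intro _; exact ⟨[], List.Forall₂.nil⟩
  | cons a l ih =>
      intro h
      obtain ⟨b, hb⟩ := h a (List.mem_cons_self (a := a) (l := l))
      obtain ⟨l', hl'⟩ := ih fun x hx => h x (List.mem_cons_of_mem a hx)
      exact ⟨b :: l', List.Forall₂.cons hb hl'⟩

theorem forall₂_mem_right {α β : Type*} {R : α → β → Prop} {l₁ : List α} {l₂ : List β}
    (h : List.Forall₂ R l₁ l₂) {b : β} (hb : b ∈ l₂) : ∃ a ∈ l₁, R a b := by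
  induction h with
  | nil => simp at hb
  | cons hab h ih =>
      rcases List.mem_cons.mp hb with rfl | hb'
      · exact ⟨_, List.mem_cons_self, hab⟩
      · obtain ⟨a, ha, har⟩ := ih hb'
        exact ⟨a, List.mem_cons_of_mem _ ha, har⟩

theorem forall₂_forall_iff {α β : Type*} {R : α → β → Prop} {P : α → Prop} {Q : β → Prop}
    {l₁ : List α} {l₂ : List β} (h : List.Forall₂ R l₁ l₂)
    (hiff : ∀ a ∈ l₁, ∀ b, R a b → (P a ↔ Q b)) :
    (∀ a ∈ l₁, P a) ↔ (∀ b ∈ l₂, Q b) := by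
  induction h with
  | nil => simp
  | cons hab h ih =>
      simp only [List.mem_cons, forall_eq_or_imp]
      rw [hiff _ (List.mem_cons_self) _ hab,
        ih fun a ha b hb => hiff a (List.mem_cons_of_mem _ ha) b hb]

theorem forall₂_exists_iff {α β : Type*} {R : α → β → Prop} {P : α → Prop} {Q : β → Prop}
    {l₁ : List α} {l₂ : List β} (h : List.Forall₂ R l₁ l₂)
    (hiff : ∀ a ∈ l₁, ∀ b, R a b → (P a ↔ Q b)) :
    (∃ a ∈ l₁, P a) ↔ (∃ b ∈ l₂, Q b) := by
  induction h with
  | nil => simp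
  | cons hab h ih =>
      simp only [List.mem_cons, exists_eq_or_imp]
      rw [hiff _ (List.mem_cons_self) _ hab,
        ih fun a ha b hb => hiff a (List.mem_cons_of_mem _ ha) b hb]

/-! ### free variables of the method's results -/

theorem elimDef_fv {d : Term σ × List (ℕ × Conj σ)} {E : Formula σ}
    (hd : d.1.vars = ∅) (hE : ElimDef d E) : E.fv = ∅ := by
  obtain ⟨Fs, Gs, hF, hG, rfl⟩ := hE
  show ((bigOr _).fv ∪ (bigAnd _).fv) = ∅
  rw [fv_bigOr_empty, fv_bigAnd_empty, Set.union_empty]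
  · intro F hF'
    obtain ⟨S, hS, rfl⟩ := List.mem_map.mp hF'
    obtain ⟨r, hr, hRS⟩ := forall₂_mem_right hG hS
    have h8 : vars8 S = ∅ := hRS.2
    have h1 : conjVars S.1 = ∅ :=
      Set.eq_empty_of_subset_empty (h8 ▸ Set.subset_union_left)
    have h2 : S.2.vars = ∅ :=
      Set.eq_empty_of_subset_empty (h8 ▸ Set.subset_union_right)
    show ((conjToFormula S.1).fv ∪ ((Formula.eq d.1 S.2).fv)) = ∅
    rw [fv_conjToFormula_empty h1]
    show (∅ ∪ (d.1.vars ∪ S.2.vars)) = ∅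
    rw [hd, h2]
    simp
  · intro F hF'
    obtain ⟨F₀, hF₀, rfl⟩ := List.mem_map.mp hF'
    obtain ⟨r, hr, hRF⟩ := forall₂_mem_right hF hF₀
    exact fv_conjToFormula_empty hRF.2

theorem elimConstraint_fv {b : Conj σ} {C : Formula σ} (hC : ElimConstraint b C) :
    C.fv = ∅ := by
  obtain ⟨b', hb', rfl⟩ := hC
  show ((conjToFormula b').fv ∪ ∅) = ∅
  rw [fv_conjToFormula_empty hb'.2]
  simp

end ASPMT
namespace ASPMT

variable {σ : Signature}

/-! ### Semantic characterizations of the pieces -/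

theorem sat_exN_all (I : Interp σ) (ν : ℕ → I.M) (b : Conj σ) :
    (exN (conjVarList b) (conjToFormula b)).Sat I ν ↔ ∃ g : ℕ → I.M, SatConj I g b := by
  rw [sat_exN]
  constructor
  · rintro ⟨g, hg, -⟩
    exact ⟨g, (sat_conjToFormula I g b).mp hg⟩
  · rintro ⟨g, hg⟩
    classical
    refine ⟨fun y => if y ∈ conjVarList b then g y else ν y, ?_, fun y hy => if_neg hy⟩
    refine (sat_conjToFormula I _ b).mpr ((satConj_congr ?_).mp hg)
    intro y hy
    rw [if_pos ((mem_conjVarList b).mpr hy)]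

theorem elimConstraint_correct {b : Conj σ} {C : Formula σ} (hC : ElimConstraint b C)
    (I : Interp σ) (ν : ℕ → I.M) : (compConstraint b).Sat I ν ↔ C.Sat I ν := by
  obtain ⟨b', hb', rfl⟩ := hC
  rw [compConstraint, sat_not, sat_not, sat_exN_all, sat_conjToFormula,
    reachesGround_sat hb' I ν]

theorem ruleBody_sat (I : Interp σ) (ν : ℕ → I.M) {w : ℕ} {r : ℕ × Conj σ}
    (hw1 : w ≠ r.1) (hw2 : w ∉ conjVars r.2) (a : I.M) :
    (exN ((conjVarList (conjSubst r.1 (Term.var w) r.2)).filter (· ≠ w))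
        (conjToFormula (conjSubst r.1 (Term.var w) r.2))).Sat I (updAssign ν w a) ↔
      ∃ h : ℕ → I.M, h r.1 = a ∧ SatConj I h r.2 := by
  classical
  set b := conjSubst r.1 (Term.var w) r.2 with hb
  set xs := (conjVarList b).filter (· ≠ w) with hxs
  have hwxs : w ∉ xs := by simp [hxs, List.mem_filter]
  rw [sat_exN]
  constructor
  · rintro ⟨g, hg, hoff⟩
    have hgw : g w = a := by
      have := hoff w hwxs
      rwa [updAssign, if_pos rfl] at this
    have hg' : SatConj I g b := (sat_conjToFormula I g b).mp hg
    have hsub := (satConj_subst I g r.1 (Term.var w) r.2).mp hg'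
    refine ⟨updAssign g r.1 (g w), by simp [updAssign, hgw], ?_⟩
    exact hsub
  · rintro ⟨h, hra, hs⟩
    set g₀ : ℕ → I.M := updAssign h w a with hg₀
    have hg₀w : g₀ w = a := by simp [hg₀, updAssign]
    have hsat₀ : SatConj I (updAssign g₀ r.1 a) r.2 := by
      refine (satConj_congr ?_).mp hs
      intro y hy
      have hyw : y ≠ w := fun hyw => hw2 (hyw ▸ hy)
      by_cases hyr : y = r.1
      · subst hyr
        rw [updAssign, if_pos rfl, hra]
      · rw [updAssign, if_neg hyr, hg₀, updAssign, if_neg hyw]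
    have hg₀sat : SatConj I g₀ b := by
      refine (satConj_subst I g₀ r.1 (Term.var w) r.2).mpr ?_
      show SatConj I (updAssign g₀ r.1 (g₀ w)) r.2
      rwa [hg₀w]
    refine ⟨fun y => if y ∈ xs then g₀ y else updAssign ν w a y, ?_, fun y hy => if_neg hy⟩
    refine (sat_conjToFormula I _ b).mpr ((satConj_congr ?_).mp hg₀sat)
    intro y hy
    by_cases hyxs : y ∈ xs
    · rw [if_pos hyxs]
    · rw [if_neg hyxs]
      have hyl : y ∈ conjVarList b := (mem_conjVarList b).mpr hy
      have hyw : y = w := by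
        by_contra hyw
        exact hyxs (by simp [hxs, List.mem_filter, hyl, hyw])
      subst hyw
      rw [updAssign, if_pos rfl, hg₀w]

theorem ruleDisj_sat (I : Interp σ) (ν : ℕ → I.M) {d1 : Term σ} (hd : d1.vars = ∅)
    {r : ℕ × Conj σ} {F : Conj σ} (hRF : ReachesGround (conjSubst r.1 d1 r.2) F) :
    SatConj I ν F ↔ ∃ h : ℕ → I.M, h r.1 = d1.eval I ν ∧ SatConj I h r.2 := by
  rw [← reachesGround_sat hRF I ν]
  constructor
  · rintro ⟨g, hg⟩
    refine ⟨updAssign g r.1 (d1.eval I g), ?_, (satConj_subst I g r.1 d1 r.2).mp hg⟩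
    rw [updAssign, if_pos rfl]
    exact Term.eval_ground hd g ν
  · rintro ⟨h, hra, hs⟩
    refine ⟨h, (satConj_subst I h r.1 d1 r.2).mpr ?_⟩
    have heq : d1.eval I h = h r.1 := by rw [Term.eval_ground hd h ν, ← hra]
    rw [heq]
    have hupd : updAssign h r.1 (h r.1) = h := by
      funext y; unfold updAssign; split
      · next hy => subst hy; rfl
      · rfl
    rwa [hupd]

theorem ruleImp_sat (I : Interp σ) (ν : ℕ → I.M) {r : ℕ × Conj σ} {S : State8 σ}
    (hRS : ReachesGround8 r.2 r.1 S) (m : I.M) :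
    (SatConj I ν S.1 → m = S.2.eval I ν) ↔
      ∀ a : I.M, (∃ h : ℕ → I.M, h r.1 = a ∧ SatConj I h r.2) → m = a := by
  have hch := state8_chain hRS.1 I (fun c => m = c)
  have h1 : conjVars S.1 = ∅ := Set.eq_empty_of_subset_empty (hRS.2 ▸ Set.subset_union_left)
  have h2 : S.2.vars = ∅ := Set.eq_empty_of_subset_empty (hRS.2 ▸ Set.subset_union_right)
  constructor
  · rintro hν a ⟨h, hra, hs⟩
    have hall : ∀ g, SatConj I g S.1 → m = S.2.eval I g := by
      intro g hg
      rw [hν ((satConj_ground h1 g ν).mp hg)]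
      exact Term.eval_ground h2 ν g
    have := (hch.mpr hall) h hs
    rw [← hra]
    exact this
  · intro hall hs
    have hL : ∀ g, SatConj I g r.2 → m = (Term.var r.1).eval I g := by
      intro g hg
      exact hall (g r.1) ⟨g, rfl, hg⟩
    exact hch.mp hL ν hs

end ASPMT
namespace ASPMT

variable {σ : Signature}

theorem sat_iff (I : Interp σ) (g : ℕ → I.M) (F G : Formula σ) :
    (F.iff G).Sat I g ↔ (F.Sat I g ↔ G.Sat I g) := by
  simp only [Formula.iff, Formula.Sat]
  exact (iff_iff_implies_and_implies).symm

theorem elimDef_correct {d : Term σ × List (ℕ × Conj σ)} {E : Formula σ} {w : ℕ}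
    (hd : d.1.vars = ∅) (hw : ∀ r ∈ d.2, w ≠ r.1 ∧ w ∉ conjVars r.2)
    (hE : ElimDef d E) (I : Interp σ) (ν : ℕ → I.M) :
    (compDef w d).Sat I ν ↔ E.Sat I ν := by
  obtain ⟨Fs, Gs, hF, hG, rfl⟩ := hE
  set m := d.1.eval I ν with hm
  -- the auxiliary predicate
  set Q : (ℕ × Conj σ) → I.M → Prop :=
    fun r a => ∃ h : ℕ → I.M, h r.1 = a ∧ SatConj I h r.2 with hQ
  -- the completion side
  have hcomp : (compDef w d).Sat I ν ↔ ∀ a : I.M, (m = a ↔ ∃ r ∈ d.2, Q r a) := by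
    show (∀ a : I.M, Formula.Sat I (updAssign ν w a)
        ((Formula.eq d.1 (Term.var w)).iff
          (bigOr (d.2.map fun r =>
            exN ((conjVarList (conjSubst r.1 (Term.var w) r.2)).filter (· ≠ w))
              (conjToFormula (conjSubst r.1 (Term.var w) r.2)))))) ↔ _
    apply forall_congr'
    intro a
    rw [sat_iff]
    have hleft : (Formula.eq d.1 (Term.var w)).Sat I (updAssign ν w a) ↔ m = a := by
      show d.1.eval I (updAssign ν w a) = (Term.var w).eval I (updAssign ν w a) ↔ _
      rw [Term.eval_ground hd (updAssign ν w a) ν]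
      show m = updAssign ν w a w ↔ m = a
      rw [updAssign, if_pos rfl]
    have hright : (bigOr (d.2.map fun r =>
        exN ((conjVarList (conjSubst r.1 (Term.var w) r.2)).filter (· ≠ w))
          (conjToFormula (conjSubst r.1 (Term.var w) r.2)))).Sat I (updAssign ν w a) ↔
        ∃ r ∈ d.2, Q r a := by
      rw [sat_bigOr]
      constructor
      · rintro ⟨G, hGmem, hGsat⟩
        obtain ⟨r, hr, rfl⟩ := List.mem_map.mp hGmem
        exact ⟨r, hr, (ruleBody_sat I ν (hw r hr).1 (hw r hr).2 a).mp hGsat⟩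
      · rintro ⟨r, hr, hQr⟩
        exact ⟨_, List.mem_map_of_mem hr,
          (ruleBody_sat I ν (hw r hr).1 (hw r hr).2 a).mpr hQr⟩
    rw [hleft, hright]
  -- the disjunction part of the result
  have hor : (bigOr (Fs.map conjToFormula)).Sat I ν ↔ ∃ r ∈ d.2, Q r m := by
    rw [sat_bigOr]
    have : (∃ G ∈ Fs.map conjToFormula, G.Sat I ν) ↔ ∃ F ∈ Fs, SatConj I ν F := by
      constructor
      · rintro ⟨G, hGmem, hGsat⟩
        obtain ⟨F, hFmem, rfl⟩ := List.mem_map.mp hGmem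
        exact ⟨F, hFmem, (sat_conjToFormula I ν F).mp hGsat⟩
      · rintro ⟨F, hFmem, hFsat⟩
        exact ⟨_, List.mem_map_of_mem hFmem, (sat_conjToFormula I ν F).mpr hFsat⟩
    rw [this]
    exact (forall₂_exists_iff hF fun r hr F hRF => (ruleDisj_sat I ν hd hRF).symm).symm
  -- the conjunction part of the result
  have hand : (bigAnd (Gs.map fun S => (conjToFormula S.1).imp (Formula.eq d.1 S.2))).Sat I ν
      ↔ ∀ r ∈ d.2, ∀ a : I.M, Q r a → m = a := by
    rw [sat_bigAnd]
    have : (∀ G ∈ Gs.map (fun S => (conjToFormula S.1).imp (Formula.eq d.1 S.2)), G.Sat I ν)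
        ↔ ∀ S ∈ Gs, (SatConj I ν S.1 → m = S.2.eval I ν) := by
      constructor
      · intro h S hS hsat
        have := h _ (List.mem_map_of_mem hS) ((sat_conjToFormula I ν S.1).mpr hsat)
        exact this
      · intro h G hGmem
        obtain ⟨S, hS, rfl⟩ := List.mem_map.mp hGmem
        intro hsat
        exact h S hS ((sat_conjToFormula I ν S.1).mp hsat)
    rw [this]
    exact (forall₂_forall_iff hG fun r hr S hRS => (ruleImp_sat I ν hRS m).symm).symm
  -- putting it together
  show _ ↔ ((bigOr (Fs.map conjToFormula)).Sat I ν ∧ _)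
  rw [hcomp, hor, hand]
  constructor
  · intro h
    refine ⟨(h m).mp rfl, fun r hr a hQa => ((h a).mpr ⟨r, hr, hQa⟩)⟩
  · rintro ⟨⟨r₀, hr₀, hQ₀⟩, hall⟩ a
    constructor
    · intro hma
      exact ⟨r₀, hr₀, hma ▸ hQ₀⟩
    · rintro ⟨r, hr, hQa⟩
      exact hall r hr a hQa

end ASPMT
namespace ASPMT

variable {σ : Signature}

theorem isHead_vars_empty {U : Set σ.Func} {g : Term σ} (h : IsHead U g) : g.vars = ∅ := by
  obtain ⟨f, -, ts, rfl, hts⟩ := h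
  show (⋃ i, (ts i).vars) = ∅
  simp [hts]

theorem elimDef_exists {U : Set σ.Func} {d : Term σ × List (ℕ × Conj σ)}
    (hhead : IsHead U d.1) (hiso : ∀ r ∈ d.2, RuleIsolated r.1 r.2) :
    ∃ E, ElimDef d E := by
  have hd : d.1.vars = ∅ := isHead_vars_empty hhead
  have hFs : ∀ r ∈ d.2, ∃ F, ReachesGround (conjSubst r.1 d.1 r.2) F := by
    intro r hr
    obtain ⟨hisoR, hacy⟩ := hiso r hr
    refine exists_reachesGround ⟨?_, acyclic_subst_ground hd hacy⟩
    exact isolators_subst_ground hd fun y hy => hisoR y (Set.mem_insert_of_mem _ hy)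
  have hGs : ∀ r ∈ d.2, ∃ S, ReachesGround8 r.2 r.1 S := by
    intro r hr
    obtain ⟨hisoR, hacy⟩ := hiso r hr
    refine exists_reachesGround8 ⟨?_, hacy⟩
    intro y hy
    rcases hy with hy | hy
    · exact hisoR y (Set.mem_insert_of_mem _ hy)
    · have : y = r.1 := hy
      exact hisoR y (this ▸ Set.mem_insert _ _)
  obtain ⟨Fs, hF⟩ := forall₂_exists hFs
  obtain ⟨Gs, hG⟩ := forall₂_exists hGs
  exact ⟨_, Fs, Gs, hF, hG, rfl⟩

theorem elimConstraint_exists {b : Conj σ} (hiso : ConstraintIsolated b) :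
    ∃ C, ElimConstraint b C := by
  obtain ⟨b', hb'⟩ := exists_reachesGround (⟨hiso.1, hiso.2⟩ : Inv b)
  exact ⟨_, b', hb', rfl⟩

end ASPMT


namespace ASPMT

/-- For the completion of any variable-isolated ASPMT program in which
no variables occur in arguments of uninterpreted functions, applying the variable
elimination method repeatedly to each equivalence of the completion results in a
formula that is classically equivalent to the completion and contains no
variables.  (`U` is the set of uninterpreted function symbols and `w` is a fresh
variable used as the value variable of the equivalences of the completion.) -/
theorem variable_elimination_correct {σ : Signature}
    (U : Set σ.Func) (P : Program σ)
    (hheads : ∀ d ∈ P.defs, IsHead U d.1)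
    (hbodies : ∀ d ∈ P.defs, ∀ r ∈ d.2, conjUGround U r.2)
    (hconstrs : ∀ b ∈ P.constraints, conjUGround U b)
    (hiso : ∀ d ∈ P.defs, ∀ r ∈ d.2, RuleIsolated r.1 r.2)
    (hisoC : ∀ b ∈ P.constraints, ConstraintIsolated b)
    (w : ℕ) (hw : ∀ d ∈ P.defs, ∀ r ∈ d.2, w ≠ r.1 ∧ w ∉ conjVars r.2) :
    -- the method applies, and
    (∃ C, MethodResult P C) ∧
    -- every result of the method contains no variables and is classically
    -- equivalent to the completion
    ∀ C, MethodResult P C →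
      C.fv = ∅ ∧ ∀ (I : Interp σ) (ν : ℕ → I.M),
        ((completion P w).Sat I ν ↔ C.Sat I ν) := by
  constructor
  · obtain ⟨Es, hEs⟩ := forall₂_exists fun d hd => elimDef_exists (hheads d hd) (hiso d hd)
    obtain ⟨Cs, hCs⟩ := forall₂_exists fun b hb => elimConstraint_exists (hisoC b hb)
    exact ⟨_, Es, Cs, hEs, hCs, rfl⟩
  · rintro C ⟨Es, Cs, hEs, hCs, rfl⟩
    constructor
    · apply fv_bigAnd_empty
      intro F hF
      rcases List.mem_append.mp hF with hF | hF
      · obtain ⟨d, hd, hElim⟩ := forall₂_mem_right hEs hF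
        exact elimDef_fv (isHead_vars_empty (hheads d hd)) hElim
      · obtain ⟨b, hb, hElim⟩ := forall₂_mem_right hCs hF
        exact elimConstraint_fv hElim
    · intro I ν
      rw [completion, sat_bigAnd, sat_bigAnd]
      rw [List.forall_mem_append, List.forall_mem_append]
      apply and_congr
      · have hmap : (∀ F ∈ P.defs.map (compDef w), F.Sat I ν) ↔
            ∀ d ∈ P.defs, (compDef w d).Sat I ν := by
          constructor
          · intro h d hd
            exact h _ (List.mem_map_of_mem hd)
          · intro h F hF
            obtain ⟨d, hd, rfl⟩ := List.mem_map.mp hF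
            exact h d hd
        rw [hmap]
        exact forall₂_forall_iff hEs fun d hd E hE =>
          elimDef_correct (isHead_vars_empty (hheads d hd)) (hw d hd) hE I ν
      · have hmap : (∀ F ∈ P.constraints.map compConstraint, F.Sat I ν) ↔
            ∀ b ∈ P.constraints, (compConstraint b).Sat I ν := by
          constructor
          · intro h b hb
            exact h _ (List.mem_map_of_mem hb)
          · intro h F hF
            obtain ⟨b, hb, rfl⟩ := List.mem_map.mp hF
            exact h b hb
        rw [hmap]
        exact forall₂_forall_iff hCs fun b hb Cx hCx =>
          elimConstraint_correct hCx I ν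

end ASPMT
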